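/- Let k be a field of characteristic zero, l ≥ 1 an integer, and c, e, r ∈ k with c ≠ 0, c = e·a_1^l. Suppose t = Σ_{i≥1} a_i s^i and t̄ = Σ_{i≥1} ā_i s^i in k[[s]] both satisfy (c + r·u^l)·(du/ds) = (u/s)^{l+1}·(e + r·s^l) (with u = t resp. t̄), and suppose a_1 = ā_1 and a_{l+1} = ā_{l+1}. Then t = t̄. In other words, a good formal coordinate solving this equation is uniquely determined by its coefficients in degrees 1 and l+1. -/

import Mathlib

open PowerSeries

private lemma aux_mul_vanish {k : Type*} [CommRing k] {f g : PowerSeries k} {a b : ℕ}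
    (hf : ∀ j < a, coeff j f = 0) (hg : ∀ j < b, coeff j g = 0) :
    ∀ j < a + b, coeff j (f * g) = 0 := by
  intro j hj
  rw [coeff_mul]
  apply Finset.sum_eq_zero
  rintro ⟨p, q⟩ hpq
  rw [Finset.HasAntidiagonal.mem_antidiagonal] at hpq
  by_cases hp : p < a
  · rw [hf p hp, zero_mul]
  · have : q < b := by omega
    rw [hg q this, mul_zero]

private lemma aux_pow_vanish {k : Type*} [CommRing k] {f : PowerSeries k}
    (h0 : constantCoeff f = 0) (i : ℕ) :
    ∀ j < i, coeff j (f ^ i) = 0 := by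
  induction i with
  | zero => intro j hj; omega
  | succ i ih =>
    have h1 : ∀ j < 1, coeff j f = 0 := by
      intro j hj
      interval_cases j
      simpa [coeff_zero_eq_constantCoeff] using h0
    rw [pow_succ]
    exact aux_mul_vanish ih h1

private lemma aux_coeff_mul_left {k : Type*} [CommRing k] {f g : PowerSeries k} {n : ℕ}
    (hg : ∀ j < n, coeff j g = 0) :
    coeff n (f * g) = constantCoeff f * coeff n g := by
  rw [coeff_mul]
  rw [Finset.sum_eq_single (0, n)]
  · simp [coeff_zero_eq_constantCoeff]
  · rintro ⟨p, q⟩ hpq hne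
    rw [Finset.HasAntidiagonal.mem_antidiagonal] at hpq
    rcases Nat.eq_zero_or_pos p with h | h
    · exact absurd (by subst h; simpa using hpq) hne
    · rw [hg q (by omega), mul_zero]
  · intro h; simp [Finset.HasAntidiagonal.mem_antidiagonal] at h

theorem good_coordinate_unique
    {k : Type*} [Field k] [CharZero k] (l : ℕ) (hl : 1 ≤ l)
    (c e r : k) (hc : c ≠ 0)
    (t tbar v vbar : PowerSeries k)
    (ht0 : constantCoeff t = 0) (htbar0 : constantCoeff tbar = 0)
    (hce : c = e * (coeff 1 t) ^ l)
    (htv : t = X * v) (htbarv : tbar = X * vbar)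
    (heq : (PowerSeries.C c + PowerSeries.C r * t ^ l) * t.derivativeFun =
      v ^ (l + 1) * (PowerSeries.C e + PowerSeries.C r * X ^ l))
    (heqbar : (PowerSeries.C c + PowerSeries.C r * tbar ^ l) * tbar.derivativeFun =
      vbar ^ (l + 1) * (PowerSeries.C e + PowerSeries.C r * X ^ l))
    (h1 : coeff 1 t = coeff 1 tbar)
    (hl1 : coeff (l + 1) t = coeff (l + 1) tbar) :
    t = tbar := by
  by_contra hne
  -- the difference and its lowest nonzero coefficient
  have hd : t - tbar ≠ 0 := sub_ne_zero_of_ne hne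
  have hex : ∃ m, coeff m (t - tbar) ≠ 0 := by
    by_contra h
    push_neg at h
    exact hd (PowerSeries.ext fun m => by simpa using h m)
  classical
  obtain ⟨m, hm, hlt⟩ : ∃ m, coeff m (t - tbar) ≠ 0 ∧
      ∀ j < m, coeff j (t - tbar) = 0 :=
    ⟨Nat.find hex, Nat.find_spec hex, fun j hj => by
      by_contra h
      exact absurd (Nat.find_le h) (Nat.not_le.mpr hj)⟩
  have hm0 : m ≠ 0 := by
    intro h
    apply hm
    rw [h, coeff_zero_eq_constantCoeff, map_sub, ht0, htbar0, sub_zero]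
  have hml : m ≠ l + 1 := by
    intro h
    apply hm
    rw [h, map_sub, hl1, sub_self]
  obtain ⟨n, rfl⟩ : ∃ n, m = n + 1 := ⟨m - 1, by omega⟩
  set a1 : k := coeff 1 t with ha1
  set dm : k := coeff (n + 1) (t - tbar) with hdm
  -- constant coefficients of v and vbar
  have hv0 : constantCoeff v = a1 := by
    rw [ha1, htv, ← coeff_zero_eq_constantCoeff]
    simpa using (coeff_succ_X_mul 0 v).symm
  have hvbar0 : constantCoeff vbar = a1 := by
    rw [h1, htbarv, ← coeff_zero_eq_constantCoeff]
    simpa using (coeff_succ_X_mul 0 vbar).symm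
  -- v - vbar vanishes below n
  have hvdiff : ∀ j < n, coeff j (v - vbar) = 0 := by
    intro j hj
    have : coeff (j + 1) (X * (v - vbar)) = 0 := by
      rw [mul_sub, ← htv, ← htbarv]
      exact hlt (j + 1) (by omega)
    rwa [coeff_succ_X_mul] at this
  have hvdm : coeff n (v - vbar) = dm := by
    have : coeff (n + 1) (X * (v - vbar)) = dm := by
      rw [mul_sub, ← htv, ← htbarv]
    rwa [coeff_succ_X_mul] at this
  -- t, tbar vanish below 1
  have ht1 : ∀ j < 1, coeff j t = 0 := by
    intro j hj; interval_cases j; simpa [coeff_zero_eq_constantCoeff] using ht0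
  have htbar1 : ∀ j < 1, coeff j tbar = 0 := by
    intro j hj; interval_cases j; simpa [coeff_zero_eq_constantCoeff] using htbar0
  -- difference of the two equations
  have hsub : (PowerSeries.C c) * (t.derivativeFun - tbar.derivativeFun)
      + (PowerSeries.C r) * (t ^ l * t.derivativeFun - tbar ^ l * tbar.derivativeFun)
      = (PowerSeries.C e) * (v ^ (l + 1) - vbar ^ (l + 1))
      + (PowerSeries.C r) * (X ^ l * (v ^ (l + 1) - vbar ^ (l + 1))) := by
    linear_combination heq - heqbar
  have key := congrArg (coeff n) hsub
  -- coefficient of the derivative difference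
  have hA : coeff n (t.derivativeFun - tbar.derivativeFun) = dm * (n + 1) := by
    rw [map_sub, (show coeff n t.derivativeFun = coeff (n + 1) t * (n + 1) from coeff_derivative t n),
      (show coeff n tbar.derivativeFun = coeff (n + 1) tbar * (n + 1) from coeff_derivative tbar n), hdm, map_sub, sub_mul]
  -- derivative difference vanishes below n
  have hderiv_lt : ∀ j < n, coeff j (t.derivativeFun - tbar.derivativeFun) = 0 := by
    intro j hj
    rw [map_sub, (show coeff j t.derivativeFun = coeff (j + 1) t * (j + 1) from coeff_derivative t j),
      (show coeff j tbar.derivativeFun = coeff (j + 1) tbar * (j + 1) from coeff_derivative tbar j), ← sub_mul, ← map_sub,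
      hlt (j + 1) (by omega), zero_mul]
  -- geometric sum factorizations
  have hgeomt : (∑ i ∈ Finset.range l, t ^ i * tbar ^ (l - 1 - i)) * (t - tbar)
      = t ^ l - tbar ^ l := geom_sum₂_mul t tbar l
  have hgeomv : (∑ i ∈ Finset.range (l + 1), v ^ i * vbar ^ (l + 1 - 1 - i)) * (v - vbar)
      = v ^ (l + 1) - vbar ^ (l + 1) := geom_sum₂_mul v vbar (l + 1)
  -- the t-geometric sum vanishes below l - 1
  have hSt : ∀ j < l - 1, coeff j (∑ i ∈ Finset.range l, t ^ i * tbar ^ (l - 1 - i)) = 0 := by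
    intro j hj
    rw [map_sum]
    apply Finset.sum_eq_zero
    intro i hi
    rw [Finset.mem_range] at hi
    have : i + (l - 1 - i) = l - 1 := by omega
    exact aux_mul_vanish (aux_pow_vanish ht0 i) (aux_pow_vanish htbar0 (l - 1 - i)) j
      (by omega)
  -- B-term vanishes at n
  have hB : coeff n (t ^ l * t.derivativeFun - tbar ^ l * tbar.derivativeFun) = 0 := by
    have hrw : t ^ l * t.derivativeFun - tbar ^ l * tbar.derivativeFun
        = t ^ l * (t.derivativeFun - tbar.derivativeFun)
          + (t ^ l - tbar ^ l) * tbar.derivativeFun := by ring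
    rw [hrw, map_add]
    have h1' : coeff n (t ^ l * (t.derivativeFun - tbar.derivativeFun)) = 0 :=
      aux_mul_vanish (aux_pow_vanish ht0 l) hderiv_lt n (by omega)
    have hdiffpow : ∀ j < (l - 1) + (n + 1), coeff j (t ^ l - tbar ^ l) = 0 := by
      rw [← hgeomt]
      exact aux_mul_vanish hSt hlt
    have h2' : coeff n ((t ^ l - tbar ^ l) * tbar.derivativeFun) = 0 :=
      aux_mul_vanish (b := 0) hdiffpow (fun j hj => absurd hj (Nat.not_lt_zero j)) n (by omega)
    rw [h1', h2', add_zero]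
  -- C term
  have hSv0 : constantCoeff (∑ i ∈ Finset.range (l + 1), v ^ i * vbar ^ (l + 1 - 1 - i))
      = (l + 1 : k) * a1 ^ l := by
    rw [map_sum]
    have : ∀ i ∈ Finset.range (l + 1),
        constantCoeff (v ^ i * vbar ^ (l + 1 - 1 - i)) = a1 ^ l := by
      intro i hi
      rw [Finset.mem_range] at hi
      rw [map_mul, map_pow, map_pow, hv0, hvbar0, ← pow_add]
      congr 1
      omega
    rw [Finset.sum_congr rfl this, Finset.sum_const, Finset.card_range, nsmul_eq_mul]
    push_cast
    ring
  have hC : coeff n (v ^ (l + 1) - vbar ^ (l + 1)) = (l + 1 : k) * a1 ^ l * dm := by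
    rw [← hgeomv, aux_coeff_mul_left hvdiff, hSv0, hvdm]
  -- D term vanishes at n
  have hD : coeff n (X ^ l * (v ^ (l + 1) - vbar ^ (l + 1))) = 0 := by
    have hX : ∀ j < l, coeff j ((X : PowerSeries k) ^ l) = 0 :=
      aux_pow_vanish (by simp) l
    have hvv : ∀ j < n, coeff j (v ^ (l + 1) - vbar ^ (l + 1)) = 0 := by
      rw [← hgeomv]
      have : ∀ j < 0, coeff j
          (∑ i ∈ Finset.range (l + 1), v ^ i * vbar ^ (l + 1 - 1 - i)) = 0 :=
        fun j hj => absurd hj (by omega)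
      simpa using aux_mul_vanish this hvdiff
    exact aux_mul_vanish hX hvv n (by omega)
  -- assemble
  rw [map_add, map_add, coeff_C_mul, coeff_C_mul, coeff_C_mul, coeff_C_mul,
    hA, hB, hC, hD] at key
  simp only [mul_zero, add_zero, zero_add] at key
  -- key : c * (dm * (n+1)) = e * ((l+1) * a1^l * dm)
  have hcast : ((n : k) + 1) ≠ ((l : k) + 1) := by
    intro h
    have h2 : ((n : k)) = ((l : k)) := by linear_combination h
    exact hml (by rw [Nat.cast_inj.mp h2])
  apply hm
  have hzero : dm * (c * ((n : k) + 1) - c * ((l : k) + 1)) = 0 := by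
    linear_combination key - dm * ((l : k) + 1) * hce
  rcases mul_eq_zero.mp hzero with h | h
  · exact h
  · exact absurd (mul_left_cancel₀ hc (sub_eq_zero.mp h)) hcast
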